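/- Conservation identity for the left backward shock (equation (3.25) in the proof of Lemma 3.1): Let f, θ, T be as in the context, let B > θ, R ∈ (0, T·f'(B)), and let y : [R/f'(B), T] → ℝ be a solution of the left backward-shock Cauchy problem with data (R,B). Set u := (f')⁻¹((y(T)+R)/T). Then B̄·y(T) + B·R − T·(u·f'(u) − f(u)) − T·f(B) = 0. (Equivalently, writing f* for the Legendre transform of f, B̄·y(T) + B·R − T·f*((y(T)+R)/T) − T·f(B) = 0, since f*(f'(u)) = u·f'(u) − f(u).) -/

import Mathlib

noncomputable section

open Set Filter

/-- The Rankine–Hugoniot speed `λ(u,v) = (f(v) - f(u)) / (v - u)`. -/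
def lamF (f : ℝ → ℝ) (u v : ℝ) : ℝ := (f v - f u) / (v - u)

/-- `y` solves the left backward-shock Cauchy problem with data `(R, B)` on
`[R / f'(B), T]`:  `y(R/f'(B)) = 0` and `y'(t) = λ((f')⁻¹((y(t)+R)/t), B̄)`.
Here `finv` denotes the inverse of `deriv f`. -/
def LeftShockSol (f finv : ℝ → ℝ) (T B Bbar R : ℝ) (y : ℝ → ℝ) : Prop :=
  y (R / deriv f B) = 0 ∧
  ∀ t ∈ Icc (R / deriv f B) T,
    HasDerivWithinAt y (lamF f (finv ((y t + R) / t)) Bbar) (Icc (R / deriv f B) T) t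

/-- `x` solves the right backward-shock Cauchy problem with data `(L, A)` on
`[L / f'(A), T]`:  `x(L/f'(A)) = 0` and `x'(t) = λ((f')⁻¹((x(t)+L)/t), Ā)`.
Here `finv` denotes the inverse of `deriv f`. -/
def RightShockSol (f finv : ℝ → ℝ) (T A Abar L : ℝ) (x : ℝ → ℝ) : Prop :=
  x (L / deriv f A) = 0 ∧
  ∀ t ∈ Icc (L / deriv f A) T,
    HasDerivWithinAt x (lamF f (finv ((x t + L) / t)) Abar) (Icc (L / deriv f A) T) t

/-- **Equation (3.25)**: conservation identity satisfied by the terminal value of the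
left backward shock. -/
theorem left_backward_shock_conservation_identity
    (f : ℝ → ℝ) (a : ℝ) (ha : 0 < a) (hf : ContDiff ℝ 2 f)
    (hf2 : ∀ u : ℝ, a ≤ deriv (deriv f) u)
    (θ : ℝ) (hθ : deriv f θ = 0)
    (finv : ℝ → ℝ) (hfinv1 : ∀ u : ℝ, finv (deriv f u) = u)
    (hfinv2 : ∀ p : ℝ, deriv f (finv p) = p)
    (T : ℝ) (hT : 0 < T)
    (B Bbar : ℝ) (hB : θ < B) (hBbar1 : Bbar ≤ θ) (hBbar2 : f Bbar = f B)
    (R : ℝ) (hR : R ∈ Ioo (0:ℝ) (T * deriv f B))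
    (y : ℝ → ℝ) (hy : LeftShockSol f finv T B Bbar R y) :
    Bbar * y T + B * R -
        T * (finv ((y T + R) / T) * deriv f (finv ((y T + R) / T)) -
              f (finv ((y T + R) / T))) -
        T * f B = 0 := by
  obtain ⟨hy0, hyd⟩ := hy
  have hfB : 0 < deriv f B := by nlinarith [hR.1, hR.2]
  set t0 := R / deriv f B with ht0def
  have ht0pos : 0 < t0 := div_pos hR.1 hfB
  have ht0T : t0 ≤ T := le_of_lt ((div_lt_iff₀ hfB).mpr (by linarith [hR.2, mul_comm T (deriv f B)]))
  -- regularity of deriv f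
  have hf' : ContDiff ℝ 1 (deriv f) := by
    have h2 : ContDiff ℝ (1 + 1) f := by exact_mod_cast hf
    exact (contDiff_succ_iff_deriv.mp h2).2.2
  have hfdiff : Differentiable ℝ f := hf.differentiable (by norm_num)
  have hf'diff : Differentiable ℝ (deriv f) := hf'.differentiable one_ne_zero
  have hf''pos : ∀ x : ℝ, 0 < deriv (deriv f) x := fun x => lt_of_lt_of_le ha (hf2 x)
  have hsm : StrictMono (deriv f) := strictMono_of_deriv_pos hf''pos
  have hmono : StrictMono finv := fun p q h => hsm.lt_iff_lt.mp (by rw [hfinv2, hfinv2]; exact h)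
  have hsurj : Function.Surjective finv := fun u => ⟨deriv f u, hfinv1 u⟩
  have hcont : Continuous finv := (StrictMono.orderIsoOfSurjective finv hmono hsurj).continuous
  have hfinvd : ∀ p : ℝ, HasDerivAt finv (deriv (deriv f) (finv p))⁻¹ p := fun p =>
    HasDerivAt.of_local_left_inverse hcont.continuousAt
      ((hf'diff (finv p)).hasDerivAt) (ne_of_gt (hf''pos _))
      (Filter.Eventually.of_forall hfinv2)
  have key : ∀ u : ℝ, (Bbar - u) * lamF f u Bbar = f Bbar - f u := by
    intro u
    rcases eq_or_ne u Bbar with h | h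
    · simp [lamF, h]
    · unfold lamF
      rw [mul_comm, div_mul_cancel₀ _ (sub_ne_zero.mpr (Ne.symm h))]
  set G : ℝ → ℝ := fun s => Bbar * y s + B * R - finv ((y s + R) / s) * (y s + R)
      + s * f (finv ((y s + R) / s)) - s * f B with hGdef
  have hG : ∀ t ∈ Icc t0 T, HasDerivWithinAt G 0 (Icc t0 T) t := by
    intro t ht
    have htpos : 0 < t := lt_of_lt_of_le ht0pos ht.1
    have hyt := hyd t ht
    set L := lamF f (finv ((y t + R) / t)) Bbar with hL
    have hq : HasDerivWithinAt (fun s => (y s + R) / s)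
        ((L * t - (y t + R) * 1) / t ^ 2) (Icc t0 T) t :=
      (hyt.add_const R).div (hasDerivWithinAt_id t _) htpos.ne'
    set q' := (L * t - (y t + R) * 1) / t ^ 2 with hq'
    have hu : HasDerivWithinAt (fun s => finv ((y s + R) / s))
        ((deriv (deriv f) (finv ((y t + R) / t)))⁻¹ * q') (Icc t0 T) t :=
      (hfinvd _).comp_hasDerivWithinAt t hq
    set u' := (deriv (deriv f) (finv ((y t + R) / t)))⁻¹ * q' with hu'
    have hfu : HasDerivWithinAt (fun s => f (finv ((y s + R) / s)))
        (deriv f (finv ((y t + R) / t)) * u') (Icc t0 T) t :=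
      ((hfdiff (finv ((y t + R) / t))).hasDerivAt).comp_hasDerivWithinAt t hu
    have hGD : HasDerivWithinAt G
        (Bbar * L - (u' * (y t + R) + finv ((y t + R) / t) * L)
          + (1 * f (finv ((y t + R) / t)) + t * (deriv f (finv ((y t + R) / t)) * u'))
          - 1 * f B) (Icc t0 T) t :=
      ((((hyt.const_mul Bbar).add_const (B * R)).sub
        (hu.mul (hyt.add_const R))).add
        ((hasDerivWithinAt_id t _).mul hfu)).sub
        ((hasDerivWithinAt_id t _).mul_const (f B))
    convert hGD using 1
    rw [hfinv2]
    have h2 : t * ((y t + R) / t) = y t + R := by field_simp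
    have hkey := key (finv ((y t + R) / t))
    rw [← hL] at hkey
    linear_combination -hkey - u' * h2 - hBbar2
  have hcontG : ContinuousOn G (Icc t0 T) := fun t ht => (hG t ht).continuousWithinAt
  have hGright : ∀ x ∈ Ico t0 T, HasDerivWithinAt G 0 (Ici x) x := fun x hx =>
    (hG x ⟨hx.1, hx.2.le⟩).mono_of_mem_nhdsWithin (Icc_mem_nhdsGE_of_mem ⟨hx.1, hx.2⟩)
  have hGT : G T = G t0 := constant_of_has_deriv_right_zero hcontG hGright T ⟨ht0T, le_rfl⟩
  have hpt0 : (y t0 + R) / t0 = deriv f B := by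
    rw [hy0, zero_add, ht0def, div_div_cancel₀]
    exact hR.1.ne'
  have hGt0 : G t0 = 0 := by
    have h1 : finv ((y t0 + R) / t0) = B := by rw [hpt0, hfinv1]
    show Bbar * y t0 + B * R - finv ((y t0 + R) / t0) * (y t0 + R)
        + t0 * f (finv ((y t0 + R) / t0)) - t0 * f B = 0
    rw [h1, hy0]; ring
  have hGT0 : Bbar * y T + B * R - finv ((y T + R) / T) * (y T + R)
      + T * f (finv ((y T + R) / T)) - T * f B = 0 := hGT.trans hGt0
  rw [hfinv2]
  have hT2 : T * ((y T + R) / T) = y T + R := by field_simp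
  linear_combination hGT0 - finv ((y T + R) / T) * hT2
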